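/- Let L* be a d-subspace of ℝ^D with d ≥ 1, let the dataset consist of N_in nonzero inliers lying in L* whose unit normalizations span L*, and N_out ≥ 1 nonzero outliers; let X̃_in and X̃_out be the matrices of unit-normalized inliers and outliers, let κ = λ_1(X̃_in X̃_inᵀ)/λ_d(X̃_in X̃_inᵀ) be the spherical d-condition number, let A = X̃_in X̃_inᵀ + X̃_out X̃_outᵀ, and let L_SPCA be the span of d orthonormal eigenvectors of A corresponding to its d largest eigenvalues. If N_in/N_out > √3 · d · κ, then ‖P_{L_SPCA} − P_{L*}‖₂ ≤ √(2/3), i.e., the largest principal angle between L_SPCA and L* is at most arccos(1/√3). -/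

import Mathlib

open Module

open Finset RealInnerProductSpace

section helpers

variable {E : Type*} [NormedAddCommGroup E] [InnerProductSpace ℝ E]

lemma inner_span_zero {ι : Type*} {v : ι → E} {x : E} (h : ∀ j, ⟪x, v j⟫ = 0)
    {u : E} (hu : u ∈ Submodule.span ℝ (Set.range v)) : ⟪x, u⟫ = 0 := by
  induction hu using Submodule.span_induction with
  | mem y hy => obtain ⟨j, rfl⟩ := hy; exact h j
  | zero => simp
  | add y z _ _ hy hz => rw [inner_add_right, hy, hz]; ring
  | smul c y _ hy => rw [real_inner_smul_right, hy]; ring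

lemma rankone_apply {D N : ℕ} (u : Fin N → EuclideanSpace ℝ (Fin D))
    (X : Matrix (Fin D) (Fin N) ℝ) (hX : X = Matrix.of fun i j => u j i)
    (x : EuclideanSpace ℝ (Fin D)) :
    Matrix.toEuclideanLin (X * X.transpose) x = ∑ j, ⟪u j, x⟫ • u j := by
  subst hX
  ext i
  have hs : (∑ j, ⟪u j, x⟫ • u j) i = ∑ j, ⟪u j, x⟫ * u j i := by
    induction (Finset.univ : Finset (Fin N)) using Finset.cons_induction with
    | empty => rfl
    | cons a s ha ih => rw [Finset.sum_cons, Finset.sum_cons, ← ih]; rfl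
  rw [hs]
  simp only [Matrix.toEuclideanLin_apply, PiLp.toLp_apply, Matrix.mulVec,
    dotProduct, Matrix.mul_apply, Matrix.transpose_apply, Matrix.of_apply,
    PiLp.inner_apply, RCLike.inner_apply, conj_trivial]
  simp_rw [Finset.sum_mul]
  rw [Finset.sum_comm]
  exact Finset.sum_congr rfl fun j _ => Finset.sum_congr rfl fun k _ => by ring

lemma quad_rankone {D N : ℕ} (u : Fin N → EuclideanSpace ℝ (Fin D))
    (x : EuclideanSpace ℝ (Fin D)) :
    ⟪∑ j, ⟪u j, x⟫ • u j, x⟫ = ∑ j, ⟪u j, x⟫ ^ 2 := by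
  rw [sum_inner]
  exact Finset.sum_congr rfl fun j _ => by rw [real_inner_smul_left]; ring

lemma quadform_onb {D : ℕ} (b : OrthonormalBasis (Fin D) ℝ (EuclideanSpace ℝ (Fin D)))
    (T : EuclideanSpace ℝ (Fin D) →ₗ[ℝ] EuclideanSpace ℝ (Fin D)) (t : Fin D → ℝ)
    (h : ∀ i, T (b i) = t i • b i) (x : EuclideanSpace ℝ (Fin D)) :
    ⟪T x, x⟫ = ∑ i, t i * ⟪b i, x⟫ ^ 2 := by
  have hx := b.sum_repr' x
  calc ⟪T x, x⟫ = ⟪T (∑ i, ⟪b i, x⟫ • b i), ∑ i, ⟪b i, x⟫ • b i⟫ := by rw [hx]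
    _ = ⟪∑ i, (⟪b i, x⟫ * t i) • b i, ∑ i, ⟪b i, x⟫ • b i⟫ := by
        rw [map_sum]; simp_rw [map_smul, h, smul_smul]
    _ = ∑ i, (⟪b i, x⟫ * t i) * ⟪b i, x⟫ := by
        rw [b.orthonormal.inner_sum]; simp
    _ = ∑ i, t i * ⟪b i, x⟫ ^ 2 := Finset.sum_congr rfl fun i _ => by ring

lemma normsq_onb {D : ℕ} (b : OrthonormalBasis (Fin D) ℝ (EuclideanSpace ℝ (Fin D)))
    (x : EuclideanSpace ℝ (Fin D)) : ∑ i, ⟪b i, x⟫ ^ 2 = ‖x‖ ^ 2 := by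
  have hx := b.sum_repr' x
  have h2 : ⟪x, x⟫ = ∑ i, ⟪b i, x⟫ * ⟪b i, x⟫ := by
    calc ⟪x, x⟫ = ⟪∑ i, ⟪b i, x⟫ • b i, ∑ i, ⟪b i, x⟫ • b i⟫ := by rw [hx]
      _ = ∑ i, ⟪b i, x⟫ * ⟪b i, x⟫ := by rw [b.orthonormal.inner_sum]; simp
  rw [← real_inner_self_eq_norm_sq, h2]
  exact Finset.sum_congr rfl fun i _ => by ring

end helpers


/-- The spectral (operator `ℓ² → ℓ²`) norm of a matrix. -/
noncomputable def specNorm {m n : ℕ} (A : Matrix (Fin m) (Fin n) ℝ) : ℝ :=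
  ‖LinearMap.toContinuousLinearMap (Matrix.toEuclideanLin A)‖

/-- The orthogonal projection onto a subspace `L` of `ℝ^D`, as a map `ℝ^D → ℝ^D`. -/
noncomputable def projCLM {D : ℕ} (L : Submodule ℝ (EuclideanSpace ℝ (Fin D))) :
    EuclideanSpace ℝ (Fin D) →L[ℝ] EuclideanSpace ℝ (Fin D) :=
  L.subtypeL.comp (L.orthogonalProjectionOnto)

section projlemmas

variable {D : ℕ} (L : Submodule ℝ (EuclideanSpace ℝ (Fin D)))

lemma projCLM_apply (x : EuclideanSpace ℝ (Fin D)) :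
    projCLM L x = (L.orthogonalProjectionOnto x : EuclideanSpace ℝ (Fin D)) := rfl

lemma projCLM_mem (x : EuclideanSpace ℝ (Fin D)) : projCLM L x ∈ L := SetLike.coe_mem _

lemma projCLM_eq_self {x : EuclideanSpace ℝ (Fin D)} (h : x ∈ L) : projCLM L x = x :=
  (Submodule.starProjection_eq_self_iff (K := L)).mpr h

lemma sub_projCLM_mem_orth (x : EuclideanSpace ℝ (Fin D)) : x - projCLM L x ∈ Lᗮ :=
  L.sub_starProjection_mem_orthogonal x

lemma projCLM_pyth (x : EuclideanSpace ℝ (Fin D)) :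
    ‖projCLM L x‖ ^ 2 + ‖x - projCLM L x‖ ^ 2 = ‖x‖ ^ 2 := by
  have h : ⟪projCLM L x, x - projCLM L x⟫ = 0 :=
    Submodule.inner_right_of_mem_orthogonal (projCLM_mem L x) (sub_projCLM_mem_orth L x)
  have hx : x = projCLM L x + (x - projCLM L x) := by abel
  calc ‖projCLM L x‖ ^ 2 + ‖x - projCLM L x‖ ^ 2
      = ‖projCLM L x‖ ^ 2 + 2 * ⟪projCLM L x, x - projCLM L x⟫ + ‖x - projCLM L x‖ ^ 2 := by
        rw [h]; ring
    _ = ‖projCLM L x + (x - projCLM L x)‖ ^ 2 := (norm_add_sq_real _ _).symm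
    _ = ‖x‖ ^ 2 := by rw [← hx]

lemma sub_projCLM_norm_le (x : EuclideanSpace ℝ (Fin D)) : ‖x - projCLM L x‖ ≤ ‖x‖ := by
  have := projCLM_pyth L x
  nlinarith [norm_nonneg (x - projCLM L x), norm_nonneg x, sq_nonneg ‖projCLM L x‖]

end projlemmas

lemma sine_from_tangent {D : ℕ} (Lstar Lspca : Submodule ℝ (EuclideanSpace ℝ (Fin D)))
    (hfrk : finrank ℝ Lspca = finrank ℝ Lstar)
    (htb : ∀ v ∈ Lspca, ‖v - projCLM Lstar v‖ ^ 2 ≤ 1 / 3 * ‖v‖ ^ 2) :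
    ∀ u ∈ Lstar, ‖u - projCLM Lspca u‖ ^ 2 ≤ 1 / 2 * ‖u‖ ^ 2 := by
  have hsurj : ∀ u ∈ Lstar, ∃ v ∈ Lspca, projCLM Lstar v = u := by
    set φ : Lspca →ₗ[ℝ] Lstar :=
      ((Lstar.orthogonalProjectionOnto).toLinearMap).comp Lspca.subtype with hφ
    have hinjφ : Function.Injective φ := by
      rw [injective_iff_map_eq_zero]
      intro v hv0
      have h0 : projCLM Lstar (v : EuclideanSpace ℝ (Fin D)) = 0 := by
        have := congrArg (Subtype.val) hv0
        simpa [hφ, projCLM_apply] using this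
      have h1 := htb v.val v.2
      rw [h0, sub_zero] at h1
      have h3 : ‖(v : EuclideanSpace ℝ (Fin D))‖ = 0 := by
        nlinarith [norm_nonneg (v : EuclideanSpace ℝ (Fin D))]
      exact Subtype.ext (norm_eq_zero.mp h3)
    have hsurjφ : Function.Surjective φ :=
      (LinearMap.injective_iff_surjective_of_finrank_eq_finrank hfrk).mp hinjφ
    intro u hu
    obtain ⟨v, hv⟩ := hsurjφ ⟨u, hu⟩
    refine ⟨v.val, v.2, ?_⟩
    have := congrArg (Subtype.val) hv
    simpa [hφ, projCLM_apply] using this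
  intro u hu
  obtain ⟨v, hvL, hPv⟩ := hsurj u hu
  set e := v - projCLM Lstar v with he
  have h1 : ‖e‖ ^ 2 ≤ 1 / 3 * ‖v‖ ^ 2 := htb v hvL
  have h2 : u - projCLM Lspca u = -(e - projCLM Lspca e) := by
    rw [← hPv, he, map_sub, projCLM_eq_self Lspca hvL]
    abel
  have h3 : ‖u - projCLM Lspca u‖ = ‖e - projCLM Lspca e‖ := by rw [h2, norm_neg]
  have h4 : ‖e - projCLM Lspca e‖ ≤ ‖e‖ := sub_projCLM_norm_le Lspca e
  have h5 : ‖projCLM Lstar v‖ ^ 2 + ‖e‖ ^ 2 = ‖v‖ ^ 2 := projCLM_pyth Lstar v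
  rw [hPv] at h5
  have h4sq : ‖e - projCLM Lspca e‖ ^ 2 ≤ ‖e‖ ^ 2 := pow_le_pow_left₀ (norm_nonneg _) h4 2
  rw [h3]
  linarith

lemma assemble {D : ℕ} (Lstar Lspca : Submodule ℝ (EuclideanSpace ℝ (Fin D)))
    (htb : ∀ v ∈ Lspca, ‖v - projCLM Lstar v‖ ^ 2 ≤ 1 / 3 * ‖v‖ ^ 2)
    (hsb : ∀ u ∈ Lstar, ‖u - projCLM Lspca u‖ ^ 2 ≤ 1 / 2 * ‖u‖ ^ 2) :
    ‖projCLM Lspca - projCLM Lstar‖ ≤ Real.sqrt (2 / 3) := by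
  have hadj : ∀ x : EuclideanSpace ℝ (Fin D),
      ‖projCLM Lstar (x - projCLM Lspca x)‖ ^ 2 ≤ 1 / 2 * ‖x - projCLM Lspca x‖ ^ 2 := by
    intro x
    set r := x - projCLM Lspca x with hr
    set u := projCLM Lstar r with hu
    have huL : u ∈ Lstar := projCLM_mem Lstar r
    have hrperp : r ∈ Lspcaᗮ := sub_projCLM_mem_orth Lspca x
    have h1 : ⟪u, r⟫ = ‖u‖ ^ 2 := by
      have hd1 : r = u + (r - u) := by abel
      have hz : ⟪u, r - u⟫ = 0 :=
        Submodule.inner_right_of_mem_orthogonal huL (sub_projCLM_mem_orth Lstar r)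
      calc ⟪u, r⟫ = ⟪u, u + (r - u)⟫ := by rw [← hd1]
        _ = ⟪u, u⟫ + ⟪u, r - u⟫ := inner_add_right _ _ _
        _ = ‖u‖ ^ 2 := by rw [hz, real_inner_self_eq_norm_sq]; ring
    have h2 : ⟪projCLM Lspca u, r⟫ = 0 :=
      Submodule.inner_right_of_mem_orthogonal (projCLM_mem Lspca u) hrperp
    have h3 : ⟪u, r⟫ = ⟪u - projCLM Lspca u, r⟫ := by
      rw [inner_sub_left, h2]
      ring
    have h4 : ‖u‖ ^ 2 ≤ ‖u - projCLM Lspca u‖ * ‖r‖ := by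
      rw [← h1, h3]
      exact real_inner_le_norm _ _
    have h5 : ‖u - projCLM Lspca u‖ ^ 2 ≤ 1 / 2 * ‖u‖ ^ 2 := hsb u huL
    by_cases hA0 : ‖u‖ = 0
    · rw [hA0]
      nlinarith [sq_nonneg ‖r‖]
    · have hApos : 0 < ‖u‖ := lt_of_le_of_ne (norm_nonneg _) (Ne.symm hA0)
      have h4sq : (‖u‖ ^ 2) ^ 2 ≤ (‖u - projCLM Lspca u‖ * ‖r‖) ^ 2 :=
        pow_le_pow_left₀ (sq_nonneg _) h4 2
      nlinarith [mul_pos hApos hApos, sq_nonneg ‖r‖, norm_nonneg r,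
        norm_nonneg (u - projCLM Lspca u)]
  refine ContinuousLinearMap.opNorm_le_bound _ (Real.sqrt_nonneg _) fun x => ?_
  set q := projCLM Lspca x with hq
  set r := x - projCLM Lspca x with hr
  have hqmem : q ∈ Lspca := projCLM_mem Lspca x
  have hxqr : x = q + r := by rw [hq, hr]; abel
  have hdecomp : projCLM Lstar x - projCLM Lspca x
      = projCLM Lstar r - (q - projCLM Lstar q) := by
    calc projCLM Lstar x - q = projCLM Lstar (q + r) - q := by rw [← hxqr]
      _ = projCLM Lstar q + projCLM Lstar r - q := by rw [map_add]
      _ = projCLM Lstar r - (q - projCLM Lstar q) := by abel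
  have horth : ⟪projCLM Lstar r, q - projCLM Lstar q⟫ = 0 :=
    Submodule.inner_right_of_mem_orthogonal (projCLM_mem Lstar r)
      (sub_projCLM_mem_orth Lstar q)
  have hnorm2 : ‖projCLM Lstar x - projCLM Lspca x‖ ^ 2
      = ‖projCLM Lstar r‖ ^ 2 + ‖q - projCLM Lstar q‖ ^ 2 := by
    rw [hdecomp, norm_sub_sq_real, horth]
    ring
  have h1 : ‖projCLM Lstar r‖ ^ 2 ≤ 1 / 2 * ‖r‖ ^ 2 := hadj x
  have h2 : ‖q - projCLM Lstar q‖ ^ 2 ≤ 1 / 3 * ‖q‖ ^ 2 := htb q hqmem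
  have h3 : ‖q‖ ^ 2 + ‖r‖ ^ 2 = ‖x‖ ^ 2 := projCLM_pyth Lspca x
  have h4 : ‖(projCLM Lspca - projCLM Lstar) x‖ ^ 2 ≤ 2 / 3 * ‖x‖ ^ 2 := by
    have heq : (projCLM Lspca - projCLM Lstar) x
        = -(projCLM Lstar x - projCLM Lspca x) := by
      rw [ContinuousLinearMap.sub_apply]
      abel
    rw [heq, norm_neg, hnorm2]
    linarith [sq_nonneg ‖q‖, sq_nonneg ‖r‖]
  have h5 := Real.sqrt_le_sqrt h4
  rw [Real.sqrt_sq (norm_nonneg _), Real.sqrt_mul (by norm_num : (0:ℝ) ≤ 2/3),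
    Real.sqrt_sq (norm_nonneg x)] at h5
  exact h5

set_option maxHeartbeats 2000000 in
/-- (SPCA initialization with adversarial outliers.) With nonzero inliers in
the `d`-subspace `L*` whose unit normalizations span `L*`, nonzero outliers, spherical
`d`-condition number `κ = λ_1(X̃_in X̃_inᵀ)/λ_d(X̃_in X̃_inᵀ)`, and `L_SPCA` the span of `d`
orthonormal eigenvectors of `A = X̃_in X̃_inᵀ + X̃_out X̃_outᵀ` corresponding to its `d`
largest eigenvalues: if `N_in/N_out > √3·d·κ`, then `‖P_{L_SPCA} − P_{L*}‖₂ ≤ √(2/3)`,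
i.e. the largest principal angle between `L_SPCA` and `L*` is at most `arccos(1/√3)`. -/
theorem stmt_12 (D d Nin Nout : ℕ) (hd : 1 ≤ d) (hdD : d ≤ D) (hNout : 1 ≤ Nout)
    (Lstar : Submodule ℝ (EuclideanSpace ℝ (Fin D)))
    (hLstar : finrank ℝ Lstar = d)
    (a : Fin Nin → EuclideanSpace ℝ (Fin D)) (ha0 : ∀ i, a i ≠ 0) (haL : ∀ i, a i ∈ Lstar)
    (hspan : Submodule.span ℝ (Set.range fun j => ‖a j‖⁻¹ • a j) = Lstar)
    (o : Fin Nout → EuclideanSpace ℝ (Fin D)) (ho0 : ∀ i, o i ≠ 0)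
    (Xin : Matrix (Fin D) (Fin Nin) ℝ) (hXin : Xin = Matrix.of fun i j => a j i / ‖a j‖)
    (Xout : Matrix (Fin D) (Fin Nout) ℝ) (hXout : Xout = Matrix.of fun i j => o j i / ‖o j‖)
    -- an antitone listing `ν` of the eigenvalues of `X̃_in X̃_inᵀ`, so `λ_1 = ν 0` and
    -- `λ_d = ν (d-1)`; the spherical `d`-condition number is `κ = ν 0 / ν (d-1)`
    (ν : Fin D → ℝ) (hν : Antitone ν)
    (cc : OrthonormalBasis (Fin D) ℝ (EuclideanSpace ℝ (Fin D)))
    (heigIn : ∀ i, Matrix.toEuclideanLin (Xin * Xin.transpose) (cc i) = ν i • cc i)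
    -- an antitone listing `μ` of the eigenvalues of `A`, with orthonormal eigenbasis `bb`
    (μ : Fin D → ℝ) (hμ : Antitone μ)
    (bb : OrthonormalBasis (Fin D) ℝ (EuclideanSpace ℝ (Fin D)))
    (heigA : ∀ i, Matrix.toEuclideanLin (Xin * Xin.transpose + Xout * Xout.transpose) (bb i)
      = μ i • bb i)
    -- `L_SPCA`: the span of the `d` orthonormal eigenvectors of `A` corresponding to its
    -- `d` largest eigenvalues
    (Lspca : Submodule ℝ (EuclideanSpace ℝ (Fin D)))
    (hLspca : Lspca = Submodule.span ℝ (Set.range fun j : Fin d => bb (Fin.castLE hdD j)))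
    (hSNR : Real.sqrt 3 * d * (ν ⟨0, by omega⟩ / ν ⟨d - 1, by omega⟩) <
      (Nin : ℝ) / Nout) :
    ‖projCLM Lspca - projCLM Lstar‖ ≤ Real.sqrt (2 / 3) := by
  classical
  have hD : 0 < D := lt_of_lt_of_le hd hdD
  set ta : Fin Nin → EuclideanSpace ℝ (Fin D) := fun j => ‖a j‖⁻¹ • a j with htadef
  set tv : Fin Nout → EuclideanSpace ℝ (Fin D) := fun j => ‖o j‖⁻¹ • o j with htvdef
  have hXin' : Xin = Matrix.of fun i j => ta j i := by
    rw [hXin]; ext i j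
    simp [htadef, div_eq_inv_mul]
  have hXout' : Xout = Matrix.of fun i j => tv j i := by
    rw [hXout]; ext i j
    simp [htvdef, div_eq_inv_mul]
  set M := Matrix.toEuclideanLin (Xin * Xin.transpose) with hMdef
  set Bo := Matrix.toEuclideanLin (Xout * Xout.transpose) with hBdef
  have hM : ∀ x, M x = ∑ j, ⟪ta j, x⟫ • ta j := fun x => rankone_apply ta Xin hXin' x
  have hB : ∀ x, Bo x = ∑ j, ⟪tv j, x⟫ • tv j := fun x => rankone_apply tv Xout hXout' x
  have heigIn' : ∀ i, M (cc i) = ν i • cc i := heigIn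
  have hA' : ∀ i, (M + Bo) (bb i) = μ i • bb i := by
    intro i
    have h := heigA i
    rw [map_add] at h
    exact h
  have htan : ∀ j, ‖ta j‖ = 1 := by
    intro j
    have h0 : ‖a j‖ ≠ 0 := norm_ne_zero_iff.mpr (ha0 j)
    rw [htadef]
    simp only [norm_smul, norm_inv, norm_norm]
    field_simp
  have htvn : ∀ j, ‖tv j‖ = 1 := by
    intro j
    have h0 : ‖o j‖ ≠ 0 := norm_ne_zero_iff.mpr (ho0 j)
    rw [htvdef]
    simp only [norm_smul, norm_inv, norm_norm]
    field_simp
  have htaL : ∀ j, ta j ∈ Lstar := fun j => Lstar.smul_mem _ (haL j)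
  have hMmem : ∀ x, M x ∈ Lstar := fun x => by
    rw [hM]; exact Submodule.sum_mem _ fun j _ => Lstar.smul_mem _ (htaL j)
  have hBquad : ∀ x, (0:ℝ) ≤ ⟪Bo x, x⟫ := fun x => by
    rw [hB, quad_rankone]; exact Finset.sum_nonneg fun j _ => sq_nonneg _
  have hBnorm : ∀ x, ‖Bo x‖ ≤ Nout * ‖x‖ := by
    intro x
    rw [hB]
    calc ‖∑ j, ⟪tv j, x⟫ • tv j‖ ≤ ∑ j, ‖⟪tv j, x⟫ • tv j‖ := norm_sum_le _ _
      _ ≤ ∑ _j : Fin Nout, ‖x‖ := by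
          refine Finset.sum_le_sum fun j _ => ?_
          rw [norm_smul, htvn j, mul_one, Real.norm_eq_abs]
          calc |⟪tv j, x⟫| ≤ ‖tv j‖ * ‖x‖ := abs_real_inner_le_norm _ _
            _ = ‖x‖ := by rw [htvn j, one_mul]
      _ = Nout * ‖x‖ := by simp [Finset.sum_const, nsmul_eq_mul]
  -- eigenvalues of M as sums of squares
  have hν_eq : ∀ i, ν i = ∑ j, ⟪ta j, cc i⟫ ^ 2 := by
    intro i
    have h1 : ⟪M (cc i), cc i⟫ = ν i := by
      rw [heigIn' i, real_inner_smul_left, real_inner_self_eq_norm_sq, cc.orthonormal.1 i]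
      ring
    rw [← h1, hM, quad_rankone]
  have hν_nonneg : ∀ i, 0 ≤ ν i := fun i => by
    rw [hν_eq i]; exact Finset.sum_nonneg fun j _ => sq_nonneg _
  have hfr : finrank ℝ (EuclideanSpace ℝ (Fin D)) = D := finrank_euclideanSpace_fin
  -- ν (d-1) > 0
  have hνd_pos : 0 < ν ⟨d - 1, by omega⟩ := by
    by_contra hle
    push_neg at hle
    have hcc0 : ∀ i : Fin D, d - 1 ≤ i.val → cc i ∈ Lstarᗮ := by
      intro i hi
      have hile : (⟨d - 1, by omega⟩ : Fin D) ≤ i := hi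
      have hν0 : ν i = 0 := le_antisymm ((hν hile).trans hle) (hν_nonneg i)
      have hz : ∀ j, ⟪ta j, cc i⟫ = 0 := by
        intro j
        have hsum0 : ∑ j, ⟪ta j, cc i⟫ ^ 2 = 0 := by rw [← hν_eq i, hν0]
        have := (Finset.sum_eq_zero_iff_of_nonneg
          (fun j _ => sq_nonneg (⟪ta j, cc i⟫))).mp hsum0 j (Finset.mem_univ j)
        exact (pow_eq_zero_iff two_ne_zero).mp this
      rw [Submodule.mem_orthogonal]
      intro u hu
      rw [← hspan] at hu
      rw [real_inner_comm]
      exact inner_span_zero (fun j => by rw [real_inner_comm]; exact hz j) hu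
    set idx0 : Fin (D - (d - 1)) → Fin D := fun k => ⟨d - 1 + k.val, by omega⟩ with hidx0
    have hinj0 : Function.Injective idx0 := by
      intro k l h
      have := congrArg Fin.val h
      simp only [hidx0] at this
      exact Fin.ext (by omega)
    have hon0 := cc.orthonormal.comp idx0 hinj0
    have hspan0 : Submodule.span ℝ (Set.range fun k => cc (idx0 k)) ≤ Lstarᗮ := by
      rw [Submodule.span_le]
      rintro _ ⟨k, rfl⟩
      exact hcc0 (idx0 k) (by simp [hidx0])
    have hr0 : finrank ℝ (Submodule.span ℝ (Set.range fun k => cc (idx0 k))) = D - (d - 1) := by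
      rw [finrank_span_eq_card (b := fun k => cc (idx0 k)) hon0.linearIndependent]
      simp
    have hle0 := Submodule.finrank_mono hspan0
    rw [hr0] at hle0
    have horth := Submodule.finrank_add_finrank_orthogonal Lstar
    rw [hLstar, hfr] at horth
    omega
  have hν_posd : ∀ i : Fin D, i.val < d → 0 < ν i := by
    intro i hi
    have : i ≤ (⟨d - 1, by omega⟩ : Fin D) := by
      show i.val ≤ d - 1
      omega
    exact lt_of_lt_of_le hνd_pos (hν this)
  have hccL : ∀ i : Fin D, i.val < d → cc i ∈ Lstar := by
    intro i hi
    have h1 : cc i = (ν i)⁻¹ • M (cc i) := by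
      rw [heigIn' i, smul_smul, inv_mul_cancel₀ (ne_of_gt (hν_posd i hi)), one_smul]
    rw [h1]
    exact Lstar.smul_mem _ (hMmem _)
  -- Lstar is the span of the first d vectors of cc
  have hE0 : Submodule.span ℝ (Set.range fun j : Fin d => cc (Fin.castLE hdD j)) = Lstar := by
    apply Submodule.eq_of_le_of_finrank_eq
    · rw [Submodule.span_le]
      rintro _ ⟨j, rfl⟩
      exact hccL _ (by simp)
    · rw [finrank_span_eq_card (b := fun j : Fin d => cc (Fin.castLE hdD j))
        ((cc.orthonormal.comp _ (Fin.castLE_injective hdD)).linearIndependent)]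
      simp [hLstar]
  have hccperp : ∀ i : Fin D, d ≤ i.val → ∀ u ∈ Lstar, ⟪cc i, u⟫ = 0 := by
    intro i hi u hu
    rw [← hE0] at hu
    refine inner_span_zero (fun j => ?_) hu
    refine cc.orthonormal.2 fun hc => ?_
    have : i.val = (j : ℕ) := by rw [hc]; rfl
    omega
  have hν_zero : ∀ i : Fin D, d ≤ i.val → ν i = 0 := by
    intro i hi
    rw [hν_eq i]
    apply Finset.sum_eq_zero
    intro j _
    rw [real_inner_comm, hccperp i hi (ta j) (htaL j)]
    norm_num
  -- sum of eigenvalues equals Nin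
  have hsum : ∑ i, ν i = (Nin : ℝ) := by
    calc ∑ i, ν i = ∑ i, ∑ j, ⟪ta j, cc i⟫ ^ 2 := Finset.sum_congr rfl fun i _ => hν_eq i
      _ = ∑ j, ∑ i, ⟪ta j, cc i⟫ ^ 2 := Finset.sum_comm
      _ = ∑ _j : Fin Nin, (1 : ℝ) := by
          refine Finset.sum_congr rfl fun j _ => ?_
          have : ∀ i, ⟪ta j, cc i⟫ ^ 2 = ⟪cc i, ta j⟫ ^ 2 := fun i => by rw [real_inner_comm]
          rw [Finset.sum_congr rfl fun i _ => this i, normsq_onb cc (ta j), htan j]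
          norm_num
      _ = (Nin : ℝ) := by simp
  have hν0_pos : 0 < ν ⟨0, by omega⟩ := by
    have : (⟨0, by omega⟩ : Fin D) ≤ ⟨d - 1, by omega⟩ := by
      show (0 : ℕ) ≤ d - 1; omega
    exact lt_of_lt_of_le hνd_pos (hν this)
  have hNin_le : (Nin : ℝ) ≤ d * ν ⟨0, by omega⟩ := by
    rw [← hsum]
    calc ∑ i, ν i ≤ ∑ i : Fin D, (if i.val < d then ν ⟨0, by omega⟩ else 0) := by
          refine Finset.sum_le_sum fun i _ => ?_
          by_cases h : i.val < d
          · simp only [h, if_true]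
            exact hν (show (⟨0, by omega⟩ : Fin D) ≤ i from (Nat.zero_le _))
          · simp only [h, if_false]
            exact le_of_eq (hν_zero i (by omega))
      _ = ∑ k ∈ Finset.range D, (if k < d then ν ⟨0, by omega⟩ else 0) := by
          rw [← Fin.sum_univ_eq_sum_range (fun k => if k < d then ν ⟨0, by omega⟩ else 0) D]
      _ = d * ν ⟨0, by omega⟩ := by
          rw [Finset.sum_ite, Finset.sum_const, Finset.sum_const_zero]
          have : Finset.filter (fun k => k < d) (Finset.range D) = Finset.range d := by
            ext k
            simp only [Finset.mem_filter, Finset.mem_range]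
            omega
          rw [this, Finset.card_range]
          simp [mul_comm]
  have hNoutpos : (0 : ℝ) < Nout := by exact_mod_cast hNout
  -- the key spectral gap: sqrt 3 * Nout < ν (d-1)
  have key : Real.sqrt 3 * Nout < ν ⟨d - 1, by omega⟩ := by
    have h1 := mul_lt_mul_of_pos_right hSNR hNoutpos
    rw [div_mul_cancel₀ _ (ne_of_gt hNoutpos)] at h1
    have h2 : Real.sqrt 3 * d * (ν ⟨0, by omega⟩ / ν ⟨d - 1, by omega⟩) * Nout
        < d * ν ⟨0, by omega⟩ := lt_of_lt_of_le h1 hNin_le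
    have h3 : Real.sqrt 3 * d * (ν ⟨0, by omega⟩ / ν ⟨d - 1, by omega⟩) * Nout
        * ν ⟨d - 1, by omega⟩ = Real.sqrt 3 * d * ν ⟨0, by omega⟩ * Nout := by
      field_simp
    have h4 : Real.sqrt 3 * d * ν ⟨0, by omega⟩ * Nout
        < d * ν ⟨0, by omega⟩ * ν ⟨d - 1, by omega⟩ := by
      rw [← h3]
      exact mul_lt_mul_of_pos_right h2 hνd_pos
    have hd' : (0 : ℝ) < d := by exact_mod_cast hd
    have h5 : (d * ν ⟨0, by omega⟩) * (Real.sqrt 3 * Nout)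
        < (d * ν ⟨0, by omega⟩) * ν ⟨d - 1, by omega⟩ := by
      calc (d * ν ⟨0, by omega⟩) * (Real.sqrt 3 * Nout)
          = Real.sqrt 3 * d * ν ⟨0, by omega⟩ * Nout := by ring
        _ < d * ν ⟨0, by omega⟩ * ν ⟨d - 1, by omega⟩ := h4
        _ = (d * ν ⟨0, by omega⟩) * ν ⟨d - 1, by omega⟩ := by ring
    exact lt_of_mul_lt_mul_left h5 (le_of_lt (mul_pos hd' hν0_pos))
  -- Courant-Fischer: μ (d-1) ≥ ν (d-1)
  have hquadM_lb : ∀ w ∈ Lstar, ν ⟨d - 1, by omega⟩ * ‖w‖ ^ 2 ≤ ⟪M w, w⟫ := by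
    intro w hw
    rw [quadform_onb cc M ν heigIn' w, ← normsq_onb cc w, Finset.mul_sum]
    refine Finset.sum_le_sum fun i _ => ?_
    by_cases h : i.val < d
    · refine mul_le_mul_of_nonneg_right ?_ (sq_nonneg _)
      exact hν (show i ≤ (⟨d - 1, by omega⟩ : Fin D) from by show i.val ≤ d - 1; omega)
    · rw [hccperp i (by omega) w hw]
      norm_num
  have hμd_ge : ν ⟨d - 1, by omega⟩ ≤ μ ⟨d - 1, by omega⟩ := by
    set idx : Fin (D - (d - 1)) → Fin D := fun k => ⟨d - 1 + k.val, by omega⟩ with hidx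
    have hinj : Function.Injective idx := by
      intro k l h
      have := congrArg Fin.val h
      simp only [hidx] at this
      exact Fin.ext (by omega)
    set S2 := Submodule.span ℝ (Set.range fun k => bb (idx k)) with hS2
    have hfr2 : finrank ℝ S2 = D - (d - 1) := by
      rw [hS2, finrank_span_eq_card (b := fun k => bb (idx k)) ((bb.orthonormal.comp idx hinj).linearIndependent)]
      simp
    have hsumfr := Submodule.finrank_sup_add_finrank_inf_eq Lstar S2
    have hsup_le : finrank ℝ ↥(Lstar ⊔ S2) ≤ D := le_trans (Submodule.finrank_le _) (le_of_eq hfr)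
    have hinf_pos : 0 < finrank ℝ ↥(Lstar ⊓ S2) := by
      rw [hLstar, hfr2] at hsumfr
      omega
    have hne : Lstar ⊓ S2 ≠ ⊥ := by
      intro hbot
      rw [hbot, finrank_bot] at hinf_pos
      omega
    obtain ⟨w, hwmem, hw0⟩ := (Submodule.ne_bot_iff _).mp hne
    have hwL : w ∈ Lstar := hwmem.1
    have hwS : w ∈ S2 := hwmem.2
    have hquadA : ⟪(M + Bo) w, w⟫ ≤ μ ⟨d - 1, by omega⟩ * ‖w‖ ^ 2 := by
      rw [quadform_onb bb (M + Bo) μ hA' w, ← normsq_onb bb w, Finset.mul_sum]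
      refine Finset.sum_le_sum fun i _ => ?_
      by_cases h : d - 1 ≤ i.val
      · refine mul_le_mul_of_nonneg_right ?_ (sq_nonneg _)
        exact hμ (show (⟨d - 1, by omega⟩ : Fin D) ≤ i from h)
      · have hz : ⟪bb i, w⟫ = 0 := by
          refine inner_span_zero (fun k => ?_) hwS
          refine bb.orthonormal.2 fun hc => ?_
          have : i.val = d - 1 + (k : ℕ) := by rw [hc]
          omega
        rw [hz]
        norm_num
    have hMA : ⟪M w, w⟫ ≤ ⟪(M + Bo) w, w⟫ := by
      rw [LinearMap.add_apply, inner_add_left]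
      have := hBquad w
      linarith
    have hwpos : 0 < ‖w‖ ^ 2 := pow_pos (norm_pos_iff.mpr hw0) 2
    have h1 := hquadM_lb w hwL
    nlinarith
  have hμd_pos : 0 < μ ⟨d - 1, by omega⟩ := lt_of_lt_of_le hνd_pos hμd_ge
  have hμ_posd : ∀ i : Fin D, i.val < d → 0 < μ i := by
    intro i hi
    refine lt_of_lt_of_le hμd_pos (hμ ?_)
    show i.val ≤ d - 1
    omega
  -- coefficients of elements of Lspca vanish beyond d
  have hbbperp : ∀ i : Fin D, d ≤ i.val → ∀ v ∈ Lspca, ⟪bb i, v⟫ = 0 := by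
    intro i hi v hv
    rw [hLspca] at hv
    refine inner_span_zero (fun j => ?_) hv
    refine bb.orthonormal.2 fun hc => ?_
    have : i.val = (j : ℕ) := by rw [hc]; rfl
    omega
  -- the tangent bound: for v in Lspca, dist to Lstar is small
  have htb : ∀ v ∈ Lspca, ‖v - projCLM Lstar v‖ ^ 2 ≤ 1 / 3 * ‖v‖ ^ 2 := by
    intro v hv
    set g : Fin D → ℝ := fun i => if i.val < d then ⟪bb i, v⟫ / μ i else 0 with hg
    set w := ∑ i, g i • bb i with hw
    have hcoef : ∀ i, ⟪bb i, w⟫ = g i := by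
      intro i
      rw [hw]
      exact bb.orthonormal.inner_right_fintype g i
    have hAw : (M + Bo) w = v := by
      rw [hw, map_sum]
      simp_rw [map_smul, hA', smul_smul]
      conv_rhs => rw [← bb.sum_repr' v]
      refine Finset.sum_congr rfl fun i _ => ?_
      congr 1
      by_cases h : i.val < d
      · simp only [hg, h, if_true]
        exact div_mul_cancel₀ _ (ne_of_gt (hμ_posd i h))
      · simp only [hg, h, if_false, zero_mul]
        rw [hbbperp i (by omega) v hv]
    have hwn : ν ⟨d - 1, by omega⟩ ^ 2 * ‖w‖ ^ 2 ≤ ‖v‖ ^ 2 := by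
      rw [← normsq_onb bb w, ← normsq_onb bb v, Finset.mul_sum]
      refine Finset.sum_le_sum fun i _ => ?_
      rw [hcoef i]
      by_cases h : i.val < d
      · simp only [hg, h, if_true]
        have hμi : ν ⟨d - 1, by omega⟩ ≤ μ i := le_trans hμd_ge
          (hμ (show i ≤ (⟨d - 1, by omega⟩ : Fin D) from by show i.val ≤ d - 1; omega))
        have hμipos := hμ_posd i h
        rw [div_pow]
        rw [mul_div_assoc']
        rw [div_le_iff₀ (by positivity)]
        have hsq : ν ⟨d - 1, by omega⟩ ^ 2 ≤ μ i ^ 2 := by nlinarith [hνd_pos]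
        nlinarith [sq_nonneg (⟪bb i, v⟫)]
      · simp only [hg, h, if_false]
        nlinarith [sq_nonneg (inner ℝ (bb i) v : ℝ)]
    have hveq : v - projCLM Lstar v = Bo w - projCLM Lstar (Bo w) := by
      have h1 : v = M w + Bo w := by rw [← hAw]; rfl
      rw [h1, map_add, projCLM_eq_self Lstar (hMmem w)]
      abel
    rw [hveq]
    have h2 : ‖Bo w - projCLM Lstar (Bo w)‖ ≤ ‖Bo w‖ := sub_projCLM_norm_le Lstar (Bo w)
    have h3 : ‖Bo w‖ ≤ Nout * ‖w‖ := hBnorm w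
    have h4 : 3 * (Nout : ℝ) ^ 2 ≤ ν ⟨d - 1, by omega⟩ ^ 2 := by
      have hkey0 : (0:ℝ) ≤ Real.sqrt 3 * Nout := by positivity
      have hmul := mul_le_mul key.le key.le hkey0 (le_trans hkey0 key.le)
      calc 3 * (Nout : ℝ) ^ 2 = (Real.sqrt 3 * Nout) * (Real.sqrt 3 * Nout) := by
            rw [show (Real.sqrt 3 * (Nout:ℝ)) * (Real.sqrt 3 * Nout)
              = Real.sqrt 3 ^ 2 * Nout ^ 2 by ring,
              Real.sq_sqrt (by norm_num : (0:ℝ) ≤ 3)]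
        _ ≤ ν ⟨d - 1, by omega⟩ * ν ⟨d - 1, by omega⟩ := hmul
        _ = ν ⟨d - 1, by omega⟩ ^ 2 := by ring
    have h5 : ‖Bo w - projCLM Lstar (Bo w)‖ ^ 2 ≤ (Nout * ‖w‖) ^ 2 :=
      pow_le_pow_left₀ (norm_nonneg _) (le_trans h2 h3) 2
    have h6 : ((Nout : ℝ) * ‖w‖) ^ 2 = (Nout:ℝ)^2 * ‖w‖^2 := by ring
    have h7 : 3 * ((Nout:ℝ)^2 * ‖w‖^2) ≤ ‖v‖^2 := by
      have := mul_le_mul_of_nonneg_right h4 (sq_nonneg ‖w‖)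
      calc 3 * ((Nout:ℝ)^2 * ‖w‖^2) = 3 * (Nout:ℝ)^2 * ‖w‖^2 := by ring
        _ ≤ ν ⟨d - 1, by omega⟩ ^ 2 * ‖w‖ ^ 2 := this
        _ ≤ ‖v‖ ^ 2 := hwn
    rw [h6] at h5
    linarith
  -- finrank of Lspca
  have hQL : finrank ℝ Lspca = d := by
    rw [hLspca, finrank_span_eq_card (b := fun j : Fin d => bb (Fin.castLE hdD j))
      ((bb.orthonormal.comp _ (Fin.castLE_injective hdD)).linearIndependent)]
    simp
  exact assemble Lstar Lspca htb
    (sine_from_tangent Lstar Lspca (by rw [hQL, hLstar]) htb)
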